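/- arXiv:2204.12115 — 5 statements merged into one kernel-verified Lean document; each statement's English description precedes it below -/
import Mathlib

section
/- (Parallel parity constraints, Theorem 1) Let p > q ≥ 0, and let β_q ∈ GF(2)^{2^p} be the concatenation of 2^{p−q} blocks β^{(1)},…,β^{(2^{p−q})} each of length 2^q. Define β_p = β_q · (F^{⊗(p−q)} ⊗ I_{2^q}) over GF(2). Then for each k ∈ {1,…,2^q}, the XOR of β_p[(j−1)·2^q + k] over j = 1,…,2^{p−q} equals β^{(1)}[k], the k-th bit of the first (leftmost) block. -/
open Matrix Kronecker Finset

/-- The polar code base (polarizing) matrix `F = [[1,0],[1,1]]` over `GF(2)`. -/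
def polarF : Matrix (Fin 2) (Fin 2) (ZMod 2) := !![1, 0; 1, 1]

/-- The `m`-fold Kronecker power `F^{⊗ m}`, with indices identified with `Fin (2^m)`
(first Kronecker factor = most significant bit, as usual). -/
def kronPowF : (m : ℕ) → Matrix (Fin (2 ^ m)) (Fin (2 ^ m)) (ZMod 2)
  | 0 => 1
  | m + 1 =>
      Matrix.reindex (finProdFinEquiv.trans (finCongr (pow_succ 2 m).symm))
        (finProdFinEquiv.trans (finCongr (pow_succ 2 m).symm)) (kronPowF m ⊗ₖ polarF)

lemma polarF_row_sum (i : Fin 2) : ∑ j, polarF i j = if (i : ℕ) = 0 then 1 else 0 := by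
  fin_cases i <;> decide

lemma kron_row_sum : ∀ (m : ℕ) (i : Fin (2 ^ m)),
    ∑ j, kronPowF m i j = if (i : ℕ) = 0 then 1 else 0
  | 0, i => by
    have : (i : ℕ) = 0 := by omega
    simp [kronPowF, Matrix.one_apply, Fin.ext_iff, this]
  | m + 1, i => by
    set e : Fin (2 ^ m) × Fin 2 ≃ Fin (2 ^ (m + 1)) :=
      finProdFinEquiv.trans (finCongr (pow_succ 2 m).symm) with he
    have h1 : ∑ j, kronPowF (m + 1) i j
        = ∑ x : Fin (2 ^ m) × Fin 2, (kronPowF m ⊗ₖ polarF) (e.symm i) x := by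
      rw [← e.sum_comp]
      simp [kronPowF, he]
    rw [h1, Fintype.sum_prod_type]
    simp only [Matrix.kroneckerMap_apply]
    rw [← Finset.sum_mul_sum]
    rw [kron_row_sum m, polarF_row_sum]
    have hval : ∀ x : Fin (2 ^ m) × Fin 2, ((e x : Fin (2 ^ (m + 1))) : ℕ) = (x.2 : ℕ) + 2 * (x.1 : ℕ) := by
      intro x
      simp [he, finProdFinEquiv]
    have hi : (i : ℕ) = ((e.symm i).2 : ℕ) + 2 * ((e.symm i).1 : ℕ) := by
      calc (i : ℕ) = ((e (e.symm i) : Fin (2 ^ (m + 1))) : ℕ) := by rw [e.apply_symm_apply]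
        _ = _ := hval _
    have h2 := (e.symm i).1.isLt
    have h3 := (e.symm i).2.isLt
    split_ifs with a b c <;> try simp
    all_goals omega

/-- For `q ≤ p`, the identification of a block index `j ∈ Fin (2^(p-q))` together with a
within-block position `k ∈ Fin (2^q)` with the coordinate `j * 2^q + k` of a length-`2^p`
vector (`0`-based; this is position `(j-1)·2^q + k` in the `1`-based notation of the paper). -/
def segEquiv (p q : ℕ) (h : q ≤ p) : Fin (2 ^ (p - q)) × Fin (2 ^ q) ≃ Fin (2 ^ p) :=
  finProdFinEquiv.trans (finCongr (by rw [← pow_add, Nat.sub_add_cancel h]))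

/-- The encoding matrix `F^{⊗(p-q)} ⊗ I_{2^q}`, acting on `GF(2)^{2^p}`. -/
def encMat (p q : ℕ) (h : q ≤ p) : Matrix (Fin (2 ^ p)) (Fin (2 ^ p)) (ZMod 2) :=
  Matrix.reindex (segEquiv p q h) (segEquiv p q h)
    (kronPowF (p - q) ⊗ₖ (1 : Matrix (Fin (2 ^ q)) (Fin (2 ^ q)) (ZMod 2)))

/-- **Theorem 1, parallel parity constraints.** Let `p > q ≥ 0` and let
`β_q ∈ GF(2)^{2^p}` (viewed as the concatenation of `2^{p-q}` blocks of length `2^q`, block `j`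
of a vector `v` being `fun k => v (segEquiv p q _ (j, k))`). Put `β_p = β_q · (F^{⊗(p−q)} ⊗ I_{2^q})`.
Then for each `k ∈ Fin (2^q)`, the XOR of `β_p[(j−1)·2^q + k]` over all blocks `j` equals the
`k`-th bit of the first (leftmost) block of `β_q`. -/
theorem parallel_parity_constraints (p q : ℕ) (hpq : q < p) (βq : Fin (2 ^ p) → ZMod 2)
    (βp : Fin (2 ^ p) → ZMod 2) (hβp : βp = βq ᵥ* encMat p q hpq.le) (k : Fin (2 ^ q)) :
    ∑ j : Fin (2 ^ (p - q)), βp (segEquiv p q hpq.le (j, k)) =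
      βq (segEquiv p q hpq.le (⟨0, by positivity⟩, k)) := by
  subst hβp
  have step : ∀ j : Fin (2 ^ (p - q)),
      (βq ᵥ* encMat p q hpq.le) (segEquiv p q hpq.le (j, k))
      = ∑ x : Fin (2 ^ (p - q)) × Fin (2 ^ q),
          βq (segEquiv p q hpq.le x) *
            (kronPowF (p - q) x.1 j *
              (1 : Matrix (Fin (2 ^ q)) (Fin (2 ^ q)) (ZMod 2)) x.2 k) := by
    intro j
    simp only [Matrix.vecMul, dotProduct]
    rw [← Equiv.sum_comp (segEquiv p q hpq.le)
      (fun l => βq l * encMat p q hpq.le l (segEquiv p q hpq.le (j, k)))]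
    apply Finset.sum_congr rfl
    intro x _
    simp [encMat, Matrix.reindex_apply, Matrix.submatrix_apply]
  calc ∑ j : Fin (2 ^ (p - q)), (βq ᵥ* encMat p q hpq.le) (segEquiv p q hpq.le (j, k))
      = ∑ j : Fin (2 ^ (p - q)), ∑ x : Fin (2 ^ (p - q)) × Fin (2 ^ q),
          βq (segEquiv p q hpq.le x) *
            (kronPowF (p - q) x.1 j *
              (1 : Matrix (Fin (2 ^ q)) (Fin (2 ^ q)) (ZMod 2)) x.2 k) :=
        Finset.sum_congr rfl fun j _ => step j
    _ = ∑ x : Fin (2 ^ (p - q)) × Fin (2 ^ q),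
          βq (segEquiv p q hpq.le x) *
            ((∑ j, kronPowF (p - q) x.1 j) *
              (1 : Matrix (Fin (2 ^ q)) (Fin (2 ^ q)) (ZMod 2)) x.2 k) := by
        rw [Finset.sum_comm]
        exact Finset.sum_congr rfl fun x _ => by
          rw [Finset.sum_mul, ← Finset.mul_sum]
    _ = βq (segEquiv p q hpq.le (⟨0, by positivity⟩, k)) := by
        rw [Fintype.sum_prod_type]
        simp only [kron_row_sum, Matrix.one_apply, mul_ite, mul_one, mul_zero, ite_mul,
          zero_mul]
        simp only [Finset.sum_ite_eq', Finset.mem_univ, if_true]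
        have h0 : ∀ x : Fin (2 ^ (p - q)), ((x : ℕ) = 0) ↔
            (x = (⟨0, by positivity⟩ : Fin (2 ^ (p - q)))) := fun x => by
          exact (Fin.ext_iff (a := x) (b := ⟨0, by positivity⟩)).symm
        simp only [h0, Finset.sum_ite_eq', Finset.mem_univ, if_true]
end

section
/- (Segmental parity constraints, Theorem 2) Let p > r ≥ 0, and let β_r ∈ GF(2)^{2^p} be the concatenation of 2^{p−r} blocks of length 2^r each, and set β_p = β_r · (F^{⊗(p−r)} ⊗ I_{2^r}) over GF(2). If the second block β^{(2)} of β_r satisfies the single-parity-check constraint ⊕_{k=1}^{2^r} β^{(2)}[k] = 0, then ⊕_{j=1}^{2^{p−r−1}} ⊕_{k=1}^{2^r} β_p[(2j−1)·2^r + k] = 0. -/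
open Matrix Kronecker Finset

def e2 (m : ℕ) : Fin (2 ^ m) × Fin 2 ≃ Fin (2 ^ (m + 1)) :=
  finProdFinEquiv.trans (finCongr (pow_succ 2 m).symm)

lemma kronPowF_succ (m : ℕ) (b c : Fin (2 ^ m) × Fin 2) :
    kronPowF (m + 1) (e2 m b) (e2 m c) = kronPowF m b.1 c.1 * polarF b.2 c.2 := by
  simp [kronPowF, e2, Matrix.reindex_apply]

lemma e2_val (m : ℕ) (b : Fin (2 ^ m) × Fin 2) : (e2 m b : ℕ) = (b.2 : ℕ) + 2 * b.1 := by
  rfl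

lemma polarF_rowsum (b : Fin 2) : ∑ c, polarF b c = if b = 0 then 1 else 0 := by
  fin_cases b <;> decide

lemma kron_rowsum : ∀ m (b : Fin (2 ^ m)), ∑ c, kronPowF m b c = if b = 0 then 1 else 0
  | 0, b => by
    have : b = 0 := by omega
    subst this
    simp [kronPowF, Matrix.one_apply]
  | m + 1, b => by
    obtain ⟨bc, rfl⟩ := (e2 m).surjective b
    rw [← Equiv.sum_comp (e2 m) (fun c => kronPowF (m + 1) (e2 m bc) c)]
    simp only [kronPowF_succ]
    rw [Fintype.sum_prod_type, ← Finset.sum_mul_sum]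
    rw [kron_rowsum m, polarF_rowsum]
    have h0 : e2 m bc = 0 ↔ bc.1 = 0 ∧ bc.2 = 0 := by
      rw [Fin.ext_iff, e2_val]
      simp only [Fin.ext_iff, Fin.val_zero]
      omega
    split_ifs with h1 h2 h3 <;> simp_all

def oddBlock (m : ℕ) (hm : 1 ≤ m) (j : Fin (2 ^ (m - 1))) : Fin (2 ^ m) :=
  ⟨2 * (j : ℕ) + 1, by
    have h2 : 2 ^ (m - 1) * 2 = 2 ^ m := by rw [← pow_succ]; congr 1; omega
    have := j.isLt; omega⟩

lemma kron_oddsum (m : ℕ) (hm : 1 ≤ m) (b : Fin (2 ^ m)) :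
    ∑ j : Fin (2 ^ (m - 1)), kronPowF m b (oddBlock m hm j)
      = if (b : ℕ) = 1 then 1 else 0 := by
  obtain ⟨m, rfl⟩ : ∃ m', m = m' + 1 := ⟨m - 1, by omega⟩
  obtain ⟨bc, rfl⟩ := (e2 m).surjective b
  have hodd : ∀ j : Fin (2 ^ m), oddBlock (m + 1) hm j = e2 m (j, 1) := by
    intro j; apply Fin.ext; rw [e2_val]; simp [oddBlock]; omega
  calc ∑ j : Fin (2 ^ m), kronPowF (m + 1) (e2 m bc) (oddBlock (m + 1) hm j)
      = ∑ j : Fin (2 ^ m), kronPowF m bc.1 j * polarF bc.2 1 := by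
        refine Finset.sum_congr rfl fun j _ => ?_
        rw [hodd j, kronPowF_succ]
    _ = (∑ j : Fin (2 ^ m), kronPowF m bc.1 j) * polarF bc.2 1 := by
        rw [Finset.sum_mul]
    _ = (if bc.1 = 0 then 1 else 0) * polarF bc.2 1 := by rw [kron_rowsum]
    _ = if ((e2 m bc : ℕ)) = 1 then 1 else 0 := by
        rw [e2_val]
        have h2 : polarF bc.2 1 = if bc.2 = 1 then 1 else 0 := by
          obtain ⟨b1,b2⟩ := bc; fin_cases b2 <;> (simp; decide)
        rw [h2]
        have h1 : bc.1 = 0 ↔ (bc.1 : ℕ) = 0 := by simp only [Fin.ext_iff, Fin.val_zero]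
        have h2' : bc.2 = 1 ↔ (bc.2 : ℕ) = 1 := by simp [Fin.ext_iff]
        split_ifs <;> simp_all <;> omega

/-- **Theorem 2, segmental parity constraint.** Let `p > r ≥ 0`, let
`β_r ∈ GF(2)^{2^p}` be a concatenation of `2^{p-r}` blocks of length `2^r`, and let
`β_p = β_r · (F^{⊗(p−r)} ⊗ I_{2^r})`. If the second block of `β_r` satisfies the
single-parity-check constraint (its bits XOR to `0`), then
`⊕_{j=1}^{2^{p−r−1}} ⊕_{k=1}^{2^r} β_p[(2j−1)·2^r + k] = 0`. -/
theorem segmental_parity_constraint (p r : ℕ) (hpr : r < p) (βr : Fin (2 ^ p) → ZMod 2)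
    (βp : Fin (2 ^ p) → ZMod 2) (hβp : βp = βr ᵥ* encMat p r hpr.le)
    (hspc : ∑ k : Fin (2 ^ r),
      βr (segEquiv p r hpr.le (⟨1, Nat.one_lt_two_pow_iff.mpr (by omega)⟩, k)) = 0) :
    ∑ j : Fin (2 ^ (p - r - 1)), ∑ k : Fin (2 ^ r),
      βp (segEquiv p r hpr.le (oddBlock (p - r) (by omega) j, k)) = 0 := by
  subst hβp
  set m := p - r with hm
  have hm1 : 1 ≤ m := by omega
  have key : ∀ (b : Fin (2 ^ m)) (k : Fin (2 ^ r)),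
      (βr ᵥ* encMat p r hpr.le) (segEquiv p r hpr.le (b, k))
        = ∑ b' : Fin (2 ^ m), βr (segEquiv p r hpr.le (b', k)) * kronPowF m b' b := by
    intro b k
    show ∑ y, βr y * encMat p r hpr.le y (segEquiv p r hpr.le (b, k)) = _
    rw [← Equiv.sum_comp (segEquiv p r hpr.le)
      (fun y => βr y * encMat p r hpr.le y (segEquiv p r hpr.le (b, k)))]
    rw [Fintype.sum_prod_type]
    refine Finset.sum_congr rfl fun b' _ => ?_
    have : ∀ k' : Fin (2 ^ r),
        encMat p r hpr.le (segEquiv p r hpr.le (b', k')) (segEquiv p r hpr.le (b, k))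
          = kronPowF m b' b * (if k' = k then 1 else 0) := by
      intro k'
      simp [encMat, Matrix.reindex_apply, Matrix.one_apply, ← hm]
      rfl
    simp only [this, mul_ite, mul_one, mul_zero, mul_comm]
    simp [Finset.sum_ite_eq]
  simp only [key]
  rw [Finset.sum_comm]
  have swap : ∀ b' : Fin (2 ^ m),
      ∑ k : Fin (2 ^ r), ∑ j : Fin (2 ^ (m - 1)),
        βr (segEquiv p r hpr.le (b', k)) * kronPowF m b' (oddBlock m hm1 j)
      = (∑ k : Fin (2 ^ r), βr (segEquiv p r hpr.le (b', k)))
          * (if (b' : ℕ) = 1 then 1 else 0) := by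
    intro b'
    rw [Finset.sum_mul]
    refine Finset.sum_congr rfl fun k _ => ?_
    rw [← Finset.mul_sum, kron_oddsum m hm1 b']
  have h1m : 1 < 2 ^ m := Nat.one_lt_two_pow_iff.mpr (by omega)
  have T : ∑ b' : Fin (2 ^ m), ∑ y : Fin (2 ^ r), ∑ x : Fin (2 ^ (m - 1)),
      βr (segEquiv p r hpr.le (b', y)) * kronPowF m b' (oddBlock m hm1 x) = 0 := by
    simp only [swap]
    have hone : ∀ b' : Fin (2 ^ m),
        (∑ k : Fin (2 ^ r), βr (segEquiv p r hpr.le (b', k)))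
            * (if (b' : ℕ) = 1 then 1 else 0)
          = if b' = ⟨1, h1m⟩ then (∑ k : Fin (2 ^ r), βr (segEquiv p r hpr.le (b', k)))
            else 0 := by
      intro b'
      rcases eq_or_ne (b' : ℕ) 1 with h | h
      · simp [h, Fin.ext_iff]
      · simp [h, Fin.ext_iff]
    simp only [hone]
    rw [Finset.sum_ite_eq' Finset.univ]
    simpa using hspc
  have e1 : ∀ y : Fin (2 ^ r),
      (∑ x : Fin (2 ^ (p - r - 1)), ∑ b' : Fin (2 ^ m),
        βr (segEquiv p r hpr.le (b', y)) * kronPowF m b' (oddBlock (p - r) (by omega) x))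
      = ∑ b' : Fin (2 ^ m), ∑ x : Fin (2 ^ (m - 1)),
        βr (segEquiv p r hpr.le (b', y)) * kronPowF m b' (oddBlock m hm1 x) :=
    fun y => Finset.sum_comm
  simp only [e1]
  rw [Finset.sum_comm]
  exact T
end

section
/- (Lemma 3) With the same definitions as Lemma 2, if {k₁,k₂} with k₁,k₂ ∈ {1,…,2^{m−1}} is feasible for γ' ∈ {0,1}^{m−1}, and γ ∈ {0,1}^m extends γ' with γ[m] = 1, then both {k₁ + 2^{m−1}, k₂} and {k₁, k₂ + 2^{m−1}} are feasible pairs for γ inside {1,…,2^m}. -/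
/-- `InSeg t k`: the (`1`-based) segment index `k` belongs to the involvement set `I_t`,
i.e. the bit of weight `2^{t−1}` in the binary expansion of `k − 1` equals `1`. -/
def InSeg (t k : ℕ) : Prop := (k - 1).testBit (t - 1) = true

/-- A pair `{k₁, k₂}` of (`1`-based) segment indices is *feasible* for the check vector
`γ ∈ {0,1}^m` if, for every `t ∈ {1, …, m}`, exactly one of `k₁, k₂` lies in `I_t`
precisely when `γ[t] = 1` (here `γ t` for `t : Fin m` is the `1`-based entry `γ[t+1]`). -/
def FeasiblePair (m : ℕ) (γ : Fin m → Bool) (k₁ k₂ : ℕ) : Prop :=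
  ∀ t : Fin m, (Xor' (InSeg ((t : ℕ) + 1) k₁) (InSeg ((t : ℕ) + 1) k₂) ↔ γ t = true)

lemma feasible_swap {m : ℕ} {γ : Fin m → Bool} {a b : ℕ} (h : FeasiblePair m γ a b) :
    FeasiblePair m γ b a := fun t =>
  Iff.trans (iff_of_eq (xor_comm (InSeg ((t : ℕ) + 1) b) (InSeg ((t : ℕ) + 1) a))) (h t)

lemma feasible_aux (m : ℕ) (hm : 1 ≤ m) (γ' : Fin (m - 1) → Bool)
    (γ : Fin m → Bool) (hext : ∀ t : Fin (m - 1), γ (Fin.castLE (Nat.sub_le m 1) t) = γ' t)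
    (hlast : γ ⟨m - 1, Nat.sub_lt hm Nat.one_pos⟩ = true) (a b : ℕ)
    (ha : 1 ≤ a) (ha' : a ≤ 2 ^ (m - 1)) (hb : 1 ≤ b) (hb' : b ≤ 2 ^ (m - 1))
    (hfeas : FeasiblePair (m - 1) γ' a b) :
    FeasiblePair m γ (a + 2 ^ (m - 1)) b := by
  intro t
  have hshift : a + 2 ^ (m - 1) - 1 = 2 ^ (m - 1) + (a - 1) := by omega
  have hj := t.isLt
  rcases lt_or_ge (t : ℕ) (m - 1) with h | h
  · have hbit : (a + 2 ^ (m - 1) - 1).testBit t = (a - 1).testBit t := by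
      rw [hshift, Nat.testBit_two_pow_add_gt h]
    have hγ : γ t = γ' ⟨t, h⟩ := hext ⟨t, h⟩
    have := hfeas ⟨t, h⟩
    simpa [InSeg, hbit, hγ] using this
  · have ht : (t : ℕ) = m - 1 := by omega
    have hbit1 : (a + 2 ^ (m - 1) - 1).testBit (m - 1) = true := by
      rw [hshift, Nat.testBit_two_pow_add_eq,
        Nat.testBit_lt_two_pow (by omega : a - 1 < 2 ^ (m - 1))]
      rfl
    have hbit2 : (b - 1).testBit (m - 1) = false :=
      Nat.testBit_lt_two_pow (by omega)
    have hγ : γ t = true := by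
      have : t = (⟨m - 1, by omega⟩ : Fin m) := by ext; exact ht
      rw [this]; exact hlast
    simp [InSeg, ht, hbit1, hbit2, hγ, Xor']

/-- **Lemma 3.** If `{k₁, k₂} ⊆ {1, …, 2^{m−1}}` is feasible for
`γ' ∈ {0,1}^{m−1}` and `γ ∈ {0,1}^m` extends `γ'` with `γ[m] = 1`, then both
`{k₁ + 2^{m−1}, k₂}` and `{k₁, k₂ + 2^{m−1}}` are feasible for `γ` inside `{1, …, 2^m}`. -/
theorem feasible_extend_odd (m : ℕ) (hm : 1 ≤ m) (γ' : Fin (m - 1) → Bool)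
    (γ : Fin m → Bool) (hext : ∀ t : Fin (m - 1), γ (Fin.castLE (by omega) t) = γ' t)
    (hlast : γ ⟨m - 1, by omega⟩ = true) (k₁ k₂ : ℕ)
    (hk₁ : 1 ≤ k₁) (hk₁' : k₁ ≤ 2 ^ (m - 1)) (hk₂ : 1 ≤ k₂) (hk₂' : k₂ ≤ 2 ^ (m - 1))
    (hfeas : FeasiblePair (m - 1) γ' k₁ k₂) :
    FeasiblePair m γ (k₁ + 2 ^ (m - 1)) k₂ ∧ FeasiblePair m γ k₁ (k₂ + 2 ^ (m - 1)) := by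
  constructor
  · exact feasible_aux m hm γ' γ hext hlast k₁ k₂ hk₁ hk₁' hk₂ hk₂' hfeas
  · exact feasible_swap (feasible_aux m hm γ' γ hext hlast k₂ k₁ hk₂ hk₂' hk₁ hk₁'
      (feasible_swap hfeas))
end

section
/- Let β ∈ GF(2)^{2^p} be partitioned into 2^{p−q} consecutive segments of length 2^q each, and for t ∈ {1,…,p−q} define the t-th S-PC check γ[t] = ⊕_{j=1}^{2^{p−q−t}} ⊕_{k=(2j−1)2^{t−1}+1}^{j·2^t} ⊕_{m=1}^{2^q} β_seg(k)[m], where β_seg(k) is the k-th segment. If β' is obtained from β by flipping one bit in segment k₁ and one bit in segment k₂, then for each t the t-th S-PC check of β' equals γ[t] XOR (|{k₁,k₂} ∩ I_t| mod 2), where I_t = {k : bit 2^{t−1} of k−1 is 1}. -/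
open Finset

instance (t k : ℕ) : Decidable (InSeg t k) := by unfold InSeg; infer_instance

/-- The `t`-th segmental parity check of a vector `β ∈ GF(2)^{2^p}` (given as a function on
`1`-based positions, partitioned into `2^{p−q}` consecutive segments of length `2^q`, so that
the `m`-th bit of segment `k` is `β ((k−1)·2^q + m)`):
`γ[t] = ⊕_{j=1}^{2^{p−q−t}} ⊕_{k=(2j−1)·2^{t−1}+1}^{j·2^t} ⊕_{m=1}^{2^q} β_seg(k)[m]`. -/
def spcCheck (p q : ℕ) (β : ℕ → ZMod 2) (t : ℕ) : ZMod 2 :=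
  ∑ j ∈ Finset.Icc 1 (2 ^ (p - q - t)),
    ∑ k ∈ Finset.Icc ((2 * j - 1) * 2 ^ (t - 1) + 1) (j * 2 ^ t),
      ∑ m ∈ Finset.Icc 1 (2 ^ q), β ((k - 1) * 2 ^ q + m)

/-- Inner sum: a single flipped position in segment `k` is hit in segment `k'` iff `k' = k`. -/
lemma spc_inner_sum (q k k' m₀ : ℕ) (hk : 1 ≤ k) (hk' : 1 ≤ k') (hm₀ : 1 ≤ m₀)
    (hm₀' : m₀ ≤ 2 ^ q) :
    (∑ m ∈ Finset.Icc 1 (2 ^ q),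
        (if (k' - 1) * 2 ^ q + m = (k - 1) * 2 ^ q + m₀ then (1 : ZMod 2) else 0))
      = if k' = k then 1 else 0 := by
  have h2q : 0 < 2 ^ q := Nat.pow_pos (n := q) (by norm_num)
  rcases eq_or_ne k' k with h | h
  · subst h
    rw [if_pos rfl]
    have : ∀ m, ((k' - 1) * 2 ^ q + m = (k' - 1) * 2 ^ q + m₀) ↔ m = m₀ := by
      intro m; omega
    simp only [this]
    rw [Finset.sum_ite_eq' (Finset.Icc 1 (2 ^ q)) m₀ (fun _ => (1 : ZMod 2))]
    rw [if_pos (Finset.mem_Icc.mpr ⟨hm₀, hm₀'⟩)]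
  · rw [if_neg h]
    apply Finset.sum_eq_zero
    intro m hm
    rw [Finset.mem_Icc] at hm
    rw [if_neg]
    intro heq
    have heq' : (k' - 1) * 2 ^ q + (m - 1) = (k - 1) * 2 ^ q + (m₀ - 1) := by omega
    have e1 : ((m - 1) + (k' - 1) * 2 ^ q) / 2 ^ q = k' - 1 := by
      rw [Nat.add_mul_div_right _ _ h2q, Nat.div_eq_of_lt (by omega)]; omega
    have e2 : ((m₀ - 1) + (k - 1) * 2 ^ q) / 2 ^ q = k - 1 := by
      rw [Nat.add_mul_div_right _ _ h2q, Nat.div_eq_of_lt (by omega)]; omega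
    rw [show (m - 1) + (k' - 1) * 2 ^ q = (k' - 1) * 2 ^ q + (m - 1) by ring, heq',
      show (k - 1) * 2 ^ q + (m₀ - 1) = (m₀ - 1) + (k - 1) * 2 ^ q by ring, e2] at e1
    omega

/-- The `j`-sum of interval-membership indicators computes the involvement of segment `k`. -/
lemma spc_jsum (p q t k : ℕ) (ht : 1 ≤ t) (ht' : t ≤ p - q) (hk : 1 ≤ k)
    (hk' : k ≤ 2 ^ (p - q)) :
    (∑ j ∈ Finset.Icc 1 (2 ^ (p - q - t)),
        (if k ∈ Finset.Icc ((2 * j - 1) * 2 ^ (t - 1) + 1) (j * 2 ^ t) then (1 : ZMod 2) else 0))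
      = if InSeg t k then 1 else 0 := by
  set e := t - 1 with he
  set n := k - 1 with hn
  set d := n / 2 ^ e with hd
  have h2e : 0 < 2 ^ e := Nat.pow_pos (n := e) (by norm_num)
  have htpow : 2 ^ t = 2 * 2 ^ e := by
    rw [show t = 1 + e by omega, pow_add, pow_one]
  -- membership criterion
  have hmem : ∀ j, 1 ≤ j →
      (k ∈ Finset.Icc ((2 * j - 1) * 2 ^ (t - 1) + 1) (j * 2 ^ t) ↔ d = 2 * j - 1) := by
    intro j hj
    rw [Finset.mem_Icc, ← he, htpow]
    constructor
    · rintro ⟨h1, h2⟩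
      have hlo : (2 * j - 1) * 2 ^ e ≤ n := by omega
      have hhi : n < (2 * j - 1 + 1) * 2 ^ e := by
        have : (2 * j - 1 + 1) * 2 ^ e = j * (2 * 2 ^ e) := by
          have : 2 * j - 1 + 1 = 2 * j := by omega
          rw [this]; ring
        omega
      exact Nat.div_eq_of_lt_le hlo hhi
    · intro hdj
      have h1 : (2 * j - 1) * 2 ^ e ≤ n := by
        rw [← hdj]; exact Nat.div_mul_le_self n (2 ^ e)
      have h2 : n < (2 * j - 1 + 1) * 2 ^ e := by
        rw [← hdj]
        exact (Nat.div_lt_iff_lt_mul h2e).mp (by omega)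
      have h3 : (2 * j - 1 + 1) * 2 ^ e = j * (2 * 2 ^ e) := by
        rw [show 2 * j - 1 + 1 = 2 * j by omega]; ring
      constructor
      · omega
      · omega
  -- InSeg in terms of d
  have hIn : InSeg t k ↔ d % 2 = 1 := by
    rw [InSeg, Nat.testBit_eq_decide_div_mod_eq, ← he, ← hn, ← hd]
    simp
  have hdlt : d < 2 * 2 ^ (p - q - t) := by
    rw [hd]
    rw [Nat.div_lt_iff_lt_mul h2e]
    have hexp : 1 + (p - q - t) + e = p - q := by omega
    have : 2 * 2 ^ (p - q - t) * 2 ^ e = 2 ^ (p - q) := by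
      conv_rhs => rw [← hexp]
      rw [pow_add, pow_add, pow_one]
    omega
  clear_value d
  clear hd
  by_cases hodd : d % 2 = 1
  · rw [if_pos (hIn.mpr hodd)]
    set j₀ := (d + 1) / 2 with hj₀
    have hdj₀ : d = 2 * j₀ - 1 := by omega
    have hj₀mem : j₀ ∈ Finset.Icc 1 (2 ^ (p - q - t)) := by
      rw [Finset.mem_Icc]; omega
    rw [Finset.sum_eq_single_of_mem j₀ hj₀mem]
    · rw [if_pos ((hmem j₀ (by omega)).mpr hdj₀)]
    · intro j hj hjne
      rw [Finset.mem_Icc] at hj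
      rw [if_neg]
      intro hmem'
      have := (hmem j hj.1).mp hmem'
      omega
  · rw [if_neg (fun h => hodd (hIn.mp h))]
    apply Finset.sum_eq_zero
    intro j hj
    rw [Finset.mem_Icc] at hj
    rw [if_neg]
    intro hmem'
    have := (hmem j hj.1).mp hmem'
    omega

/-- A single flip in segment `k` changes the `t`-th check by the involvement indicator. -/
lemma spc_flip_sum (p q t k m₀ : ℕ) (ht : 1 ≤ t) (ht' : t ≤ p - q) (hk : 1 ≤ k)
    (hk' : k ≤ 2 ^ (p - q)) (hm₀ : 1 ≤ m₀) (hm₀' : m₀ ≤ 2 ^ q) :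
    (∑ j ∈ Finset.Icc 1 (2 ^ (p - q - t)),
      ∑ k' ∈ Finset.Icc ((2 * j - 1) * 2 ^ (t - 1) + 1) (j * 2 ^ t),
        ∑ m ∈ Finset.Icc 1 (2 ^ q),
          (if (k' - 1) * 2 ^ q + m = (k - 1) * 2 ^ q + m₀ then (1 : ZMod 2) else 0))
      = if InSeg t k then 1 else 0 := by
  rw [← spc_jsum p q t k ht ht' hk hk']
  apply Finset.sum_congr rfl
  intro j hj
  have hstep : ∀ k' ∈ Finset.Icc ((2 * j - 1) * 2 ^ (t - 1) + 1) (j * 2 ^ t),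
      (∑ m ∈ Finset.Icc 1 (2 ^ q),
        (if (k' - 1) * 2 ^ q + m = (k - 1) * 2 ^ q + m₀ then (1 : ZMod 2) else 0))
      = if k' = k then 1 else 0 := by
    intro k' hk'mem
    rw [Finset.mem_Icc] at hk'mem
    exact spc_inner_sum q k k' m₀ hk (by omega) hm₀ hm₀'
  rw [Finset.sum_congr rfl hstep,
    Finset.sum_ite_eq' (Finset.Icc ((2 * j - 1) * 2 ^ (t - 1) + 1) (j * 2 ^ t)) k
      (fun _ => (1 : ZMod 2))]

/-- If `β'` is obtained from `β` by flipping one bit in segment `k₁` (at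
within-segment position `m₁`) and one bit in segment `k₂` (at position `m₂`), with `k₁ ≠ k₂`,
then for each `t ∈ {1, …, p−q}` the `t`-th segmental parity check of `β'` equals
`γ[t] XOR (|{k₁, k₂} ∩ I_t| mod 2)`. -/
theorem spcCheck_pairFlip (p q : ℕ) (hpq : q < p) (β β' : ℕ → ZMod 2) (k₁ k₂ m₁ m₂ : ℕ)
    (hk₁ : 1 ≤ k₁) (hk₁' : k₁ ≤ 2 ^ (p - q)) (hk₂ : 1 ≤ k₂) (hk₂' : k₂ ≤ 2 ^ (p - q))
    (hne : k₁ ≠ k₂) (hm₁ : 1 ≤ m₁) (hm₁' : m₁ ≤ 2 ^ q) (hm₂ : 1 ≤ m₂) (hm₂' : m₂ ≤ 2 ^ q)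
    (hβ' : ∀ i, β' i = β i + (if i = (k₁ - 1) * 2 ^ q + m₁ then 1 else 0) +
      (if i = (k₂ - 1) * 2 ^ q + m₂ then 1 else 0)) :
    ∀ t, 1 ≤ t → t ≤ p - q →
      spcCheck p q β' t =
        spcCheck p q β t + ((if InSeg t k₁ then 1 else 0) + (if InSeg t k₂ then 1 else 0)) := by
  intro t ht ht'
  unfold spcCheck
  simp only [hβ', Finset.sum_add_distrib]
  rw [spc_flip_sum p q t k₁ m₁ ht ht' hk₁ hk₁' hm₁ hm₁',
    spc_flip_sum p q t k₂ m₂ ht ht' hk₂ hk₂' hm₂ hm₂']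
  ring
end

section
/- For any m ≥ 1 and any nonzero γ ∈ {0,1}^m, the set of feasible pairs produced by the recursive splitting construction (base case: pairs {k, k+2^{m'−1}} when γ = (0,…,0,1) restricted to its leading nonzero block; splitting per Lemmas 2–4) coincides exactly with the set {{k₁,k₂} : (k₁−1) XOR (k₂−1) = Σ_t γ[t]·2^{t−1}}; hence every pair generated by Algorithm 2 satisfies all segmental parity check requirements encoded by γ. -/
lemma add_pow_eq_xor {n a : ℕ} (ha : a < 2 ^ n) : a + 2 ^ n = a ^^^ 2 ^ n := by
  apply Nat.eq_of_testBit_eq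
  intro i
  rcases lt_trichotomy i n with h | h | h
  · rw [Nat.add_comm, Nat.testBit_two_pow_add_gt h, Nat.testBit_xor,
      Nat.testBit_two_pow_of_ne (by omega), Bool.xor_false]
  · subst h
    rw [Nat.add_comm, Nat.testBit_two_pow_add_eq, Nat.testBit_xor,
      Nat.testBit_two_pow_self, Nat.testBit_lt_two_pow ha]
    simp
  · have h2 : 2 ^ (n + 1) ≤ 2 ^ i := Nat.pow_le_pow_right (by norm_num) h
    have h3 : 2 ^ (n + 1) = 2 ^ n + 2 ^ n := by ring
    rw [Nat.testBit_lt_two_pow (by omega), Nat.testBit_xor,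
      Nat.testBit_lt_two_pow (by omega), Nat.testBit_two_pow_of_ne (by omega)]
    simp

lemma xor_add_pow_left {n a b : ℕ} (ha : a < 2 ^ n) (hb : b < 2 ^ n) :
    (a + 2 ^ n) ^^^ b = (a ^^^ b) + 2 ^ n := by
  rw [add_pow_eq_xor ha, add_pow_eq_xor (Nat.xor_lt_two_pow ha hb),
    Nat.xor_assoc, Nat.xor_comm (2 ^ n) b, ← Nat.xor_assoc]

lemma xor_add_pow_right {n a b : ℕ} (ha : a < 2 ^ n) (hb : b < 2 ^ n) :
    a ^^^ (b + 2 ^ n) = (a ^^^ b) + 2 ^ n := by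
  rw [Nat.xor_comm, xor_add_pow_left hb ha, Nat.xor_comm]

lemma xor_add_pow_both {n a b : ℕ} (ha : a < 2 ^ n) (hb : b < 2 ^ n) :
    (a + 2 ^ n) ^^^ (b + 2 ^ n) = a ^^^ b := by
  rw [add_pow_eq_xor ha, add_pow_eq_xor hb, Nat.xor_assoc, Nat.xor_comm (2 ^ n),
    Nat.xor_assoc, Nat.xor_self, Nat.xor_zero]

def Nval (m : ℕ) (γ : Fin m → Bool) : ℕ := ∑ t : Fin m, (if γ t then 2 ^ (t : ℕ) else 0)

lemma Nval_succ (m : ℕ) (γ : Fin (m + 1) → Bool) :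
    Nval (m + 1) γ = Nval m (fun t => γ t.castSucc) + (if γ (Fin.last m) then 2 ^ m else 0) := by
  rw [Nval, Fin.sum_univ_castSucc]
  simp [Nval]

lemma Nval_lt (m : ℕ) (γ : Fin m → Bool) : Nval m γ < 2 ^ m := by
  induction m with
  | zero => simp [Nval]
  | succ m ih =>
    rw [Nval_succ]
    have := ih fun t => γ t.castSucc
    have h2 : 2 ^ (m + 1) = 2 ^ m + 2 ^ m := by ring
    split <;> omega

lemma Nval_pos (m : ℕ) (γ : Fin m → Bool) (h : γ ≠ fun _ => false) : 0 < Nval m γ := by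
  obtain ⟨t, ht⟩ : ∃ t, γ t = true := by
    by_contra hc
    push_neg at hc
    exact h (funext fun t => by simpa using hc t)
  have h1 : (if γ t then 2 ^ (t : ℕ) else 0) ≤ Nval m γ := by
    rw [Nval]
    exact Finset.single_le_sum (f := fun t => if γ t then 2 ^ (t : ℕ) else 0)
      (fun i _ => Nat.zero_le _) (Finset.mem_univ t)
  rw [ht, if_pos rfl] at h1
  have h2 : 0 < 2 ^ (t : ℕ) := Nat.pow_pos (by norm_num)
  omega

lemma Nval_testBit : ∀ (m : ℕ) (γ : Fin m → Bool) (j : ℕ) (hj : j < m),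
    (Nval m γ).testBit j = γ ⟨j, hj⟩ := by
  intro m
  induction m with
  | zero => omega
  | succ m ih =>
    intro γ j hj
    have hlt := Nval_lt m fun t => γ t.castSucc
    rw [Nval_succ]
    rcases Nat.lt_or_ge j m with h | h
    · by_cases hl : γ (Fin.last m) = true
      · rw [if_pos hl, add_pow_eq_xor hlt, Nat.testBit_xor,
          Nat.testBit_two_pow_of_ne (by omega), Bool.xor_false, ih (fun t => γ t.castSucc) j h]
        rfl
      · rw [if_neg hl, Nat.add_zero, ih (fun t => γ t.castSucc) j h]
        rfl
    · have hfin : (⟨j, hj⟩ : Fin (m + 1)) = Fin.last m := by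
        ext
        simp only [Fin.val_last]
        omega
      rw [hfin, show j = m from by omega]
      by_cases hl : γ (Fin.last m) = true
      · rw [if_pos hl, add_pow_eq_xor hlt, Nat.testBit_xor,
          Nat.testBit_two_pow_self, Nat.testBit_lt_two_pow hlt]
        simpa using hl.symm
      · rw [if_neg hl, Nat.add_zero, Nat.testBit_lt_two_pow hlt]
        simp at hl
        exact hl.symm
/-- The flipping set generated by the recursive splitting construction of Algorithm 2:
base case (order `1`, and the check vector `(0, …, 0, 1)` per Lemma 1), and splitting of the
flipping set of the order-`(m−1)` node according to the last check (Lemmas 2 and 3). Pairs are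
recorded as ordered pairs of (`1`-based) segment indices. -/
def flipSet : (m : ℕ) → (Fin m → Bool) → Finset (ℕ × ℕ)
  | 0, _ => ∅
  | 1, γ => if γ 0 = true then {(1, 2)} else ∅
  | m + 2, γ =>
    if (∀ t : Fin (m + 1), γ t.castSucc = false) ∧ γ (Fin.last (m + 1)) = true then
      (Finset.Icc 1 (2 ^ (m + 1))).image fun k => (k, k + 2 ^ (m + 1))
    else
      let Fp := flipSet (m + 1) fun t => γ t.castSucc
      if γ (Fin.last (m + 1)) = true then
        Fp.image (fun e => (e.1 + 2 ^ (m + 1), e.2)) ∪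
          Fp.image (fun e => (e.1, e.2 + 2 ^ (m + 1)))
      else
        Fp ∪ Fp.image fun e => (e.1 + 2 ^ (m + 1), e.2 + 2 ^ (m + 1))

lemma mem_char : ∀ (m : ℕ) (γ : Fin m → Bool), γ ≠ (fun _ => false) →
    ∀ k₁ k₂ : ℕ,
      (((k₁, k₂) ∈ flipSet m γ ∨ (k₂, k₁) ∈ flipSet m γ) ↔
        (1 ≤ k₁ ∧ 1 ≤ k₂ ∧ k₁ ≤ 2 ^ m ∧ k₂ ≤ 2 ^ m ∧
          (k₁ - 1) ^^^ (k₂ - 1) = Nval m γ)) := by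
  intro m
  induction m with
  | zero => intro γ hγ; exact absurd (funext fun t => t.elim0) hγ
  | succ n ih =>
    rcases n with _ | m
    · -- m = 1
      intro γ hγ k₁ k₂
      have h0 : γ 0 = true := by
        by_contra h
        exact hγ (funext fun t => by rw [Fin.fin_one_eq_zero t]; simpa using h)
      have hF : flipSet 1 γ = {(1, 2)} := by simp [flipSet, h0]
      have hN : Nval 1 γ = 1 := by rw [Nval, Fin.sum_univ_one, h0]; simp
      rw [hF, hN]
      simp only [Finset.mem_singleton, Prod.mk.injEq]
      constructor
      · rintro (⟨rfl, rfl⟩ | ⟨rfl, rfl⟩) <;> norm_num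
      · rintro ⟨h1, h2, h3, h4, h5⟩
        norm_num at h3 h4
        interval_cases k₁ <;> interval_cases k₂ <;> simp_all
    · -- m + 2
      intro γ hγ k₁ k₂
      have hP2 : 2 ^ (m + 2) = 2 ^ (m + 1) + 2 ^ (m + 1) := by ring
      have hsplit := Nval_succ (m + 1) γ
      by_cases hbase : (∀ t : Fin (m + 1), γ t.castSucc = false) ∧ γ (Fin.last (m + 1)) = true
      · -- base case
        have hF : flipSet (m + 2) γ =
            (Finset.Icc 1 (2 ^ (m + 1))).image fun k => (k, k + 2 ^ (m + 1)) := by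
          simp only [flipSet]
          rw [if_pos hbase]
        have hN' : Nval (m + 1) (fun t => γ t.castSucc) = 0 :=
          Finset.sum_eq_zero fun t _ => by simp [hbase.1 t]
        have hN : Nval (m + 2) γ = 2 ^ (m + 1) := by
          rw [hsplit, hN', hbase.2]
          simp
        rw [hF, hN]
        simp only [Finset.mem_image, Finset.mem_Icc, Prod.mk.injEq]
        constructor
        · rintro (⟨k, ⟨hk1, hk2⟩, rfl, rfl⟩ | ⟨k, ⟨hk1, hk2⟩, rfl, rfl⟩)
          · refine ⟨hk1, by omega, by omega, by omega, ?_⟩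
            rw [show k + 2 ^ (m + 1) - 1 = (k - 1) + 2 ^ (m + 1) from by omega,
              xor_add_pow_right (by omega) (by omega), Nat.xor_self, Nat.zero_add]
          · refine ⟨by omega, hk1, by omega, by omega, ?_⟩
            rw [show k + 2 ^ (m + 1) - 1 = (k - 1) + 2 ^ (m + 1) from by omega,
              xor_add_pow_left (by omega) (by omega), Nat.xor_self, Nat.zero_add]
        · rintro ⟨h1, h2, h3, h4, h5⟩
          rcases Nat.lt_or_ge (k₁ - 1) (2 ^ (m + 1)) with c1 | c1 <;>
            rcases Nat.lt_or_ge (k₂ - 1) (2 ^ (m + 1)) with c2 | c2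
          · exact absurd h5 (by have := Nat.xor_lt_two_pow c1 c2; omega)
          · left
            refine ⟨k₁, ⟨h1, by omega⟩, rfl, ?_⟩
            rw [show k₂ - 1 = (k₂ - 1 - 2 ^ (m + 1)) + 2 ^ (m + 1) from by omega,
              xor_add_pow_right c1 (by omega)] at h5
            have : (k₁ - 1) ^^^ (k₂ - 1 - 2 ^ (m + 1)) = 0 := by omega
            replace this := congrArg (· ^^^ (k₂ - 1 - 2 ^ (m + 1))) this
            simp only [Nat.xor_assoc, Nat.xor_self, Nat.xor_zero, Nat.zero_xor] at this
            omega
          · right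
            refine ⟨k₂, ⟨h2, by omega⟩, rfl, ?_⟩
            rw [show k₁ - 1 = (k₁ - 1 - 2 ^ (m + 1)) + 2 ^ (m + 1) from by omega,
              xor_add_pow_left (by omega) c2] at h5
            have : (k₁ - 1 - 2 ^ (m + 1)) ^^^ (k₂ - 1) = 0 := by omega
            replace this := congrArg (· ^^^ (k₂ - 1)) this
            simp only [Nat.xor_assoc, Nat.xor_self, Nat.xor_zero, Nat.zero_xor] at this
            omega
          · exfalso
            rw [show k₁ - 1 = (k₁ - 1 - 2 ^ (m + 1)) + 2 ^ (m + 1) from by omega,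
              show k₂ - 1 = (k₂ - 1 - 2 ^ (m + 1)) + 2 ^ (m + 1) from by omega,
              xor_add_pow_both (by omega) (by omega)] at h5
            have := Nat.xor_lt_two_pow (n := m + 1)
              (x := k₁ - 1 - 2 ^ (m + 1)) (y := k₂ - 1 - 2 ^ (m + 1)) (by omega) (by omega)
            omega
      · -- recursive cases
        have hN'lt := Nval_lt (m + 1) fun t => γ t.castSucc
        by_cases hlast : γ (Fin.last (m + 1)) = true
        · -- last bit 1
          have hγ' : (fun t : Fin (m + 1) => γ t.castSucc) ≠ fun _ => false := by
            intro hc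
            exact hbase ⟨fun t => congrFun hc t, hlast⟩
          have IH := ih (fun t => γ t.castSucc) hγ'
          have hN : Nval (m + 2) γ = Nval (m + 1) (fun t => γ t.castSucc) + 2 ^ (m + 1) := by
            rw [hsplit, hlast]
            simp
          have hF : flipSet (m + 2) γ =
              (flipSet (m + 1) fun t => γ t.castSucc).image
                  (fun e => (e.1 + 2 ^ (m + 1), e.2)) ∪
                (flipSet (m + 1) fun t => γ t.castSucc).image
                  (fun e => (e.1, e.2 + 2 ^ (m + 1))) := by
            simp only [flipSet]
            rw [if_neg hbase, if_pos hlast]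
          rw [hF, hN]
          simp only [Finset.mem_union, Finset.mem_image, Prod.mk.injEq]
          constructor
          · rintro ((⟨⟨a, b⟩, he, h1, h2⟩ | ⟨⟨a, b⟩, he, h1, h2⟩) |
              (⟨⟨a, b⟩, he, h1, h2⟩ | ⟨⟨a, b⟩, he, h1, h2⟩)) <;>
              obtain ⟨ha1, hb1, ha2, hb2, hxor⟩ := (IH a b).mp (Or.inl he)
            · refine ⟨by omega, by omega, by omega, by omega, ?_⟩
              rw [show k₁ - 1 = (a - 1) + 2 ^ (m + 1) from by omega,
                show k₂ - 1 = b - 1 from by omega,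
                xor_add_pow_left (by omega) (by omega), hxor]
            · refine ⟨by omega, by omega, by omega, by omega, ?_⟩
              rw [show k₁ - 1 = a - 1 from by omega,
                show k₂ - 1 = (b - 1) + 2 ^ (m + 1) from by omega,
                xor_add_pow_right (by omega) (by omega), hxor]
            · refine ⟨by omega, by omega, by omega, by omega, ?_⟩
              rw [show k₂ - 1 = (a - 1) + 2 ^ (m + 1) from by omega,
                show k₁ - 1 = b - 1 from by omega,
                xor_add_pow_right (by omega) (by omega), Nat.xor_comm, hxor]
            · refine ⟨by omega, by omega, by omega, by omega, ?_⟩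
              rw [show k₂ - 1 = a - 1 from by omega,
                show k₁ - 1 = (b - 1) + 2 ^ (m + 1) from by omega,
                xor_add_pow_left (by omega) (by omega), Nat.xor_comm (b-1) (a-1), hxor]
          · rintro ⟨h1, h2, h3, h4, h5⟩
            rcases Nat.lt_or_ge (k₁ - 1) (2 ^ (m + 1)) with c1 | c1 <;>
              rcases Nat.lt_or_ge (k₂ - 1) (2 ^ (m + 1)) with c2 | c2
            · exact absurd h5 (by have := Nat.xor_lt_two_pow c1 c2; omega)
            · -- k₁ low, k₂ high
              rw [show k₂ - 1 = (k₂ - 2 ^ (m + 1) - 1) + 2 ^ (m + 1) from by omega,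
                xor_add_pow_right c1 (by omega)] at h5
              have hx : (k₁ - 1) ^^^ (k₂ - 2 ^ (m + 1) - 1) =
                  Nval (m + 1) fun t => γ t.castSucc := by omega
              rcases (IH k₁ (k₂ - 2 ^ (m + 1))).mpr
                  ⟨h1, by omega, by omega, by omega, hx⟩ with h | h
              · exact Or.inl (Or.inr ⟨(k₁, k₂ - 2 ^ (m + 1)), h, rfl, by omega⟩)
              · exact Or.inr (Or.inl ⟨(k₂ - 2 ^ (m + 1), k₁), h, by omega, rfl⟩)
            · -- k₁ high, k₂ low
              rw [show k₁ - 1 = (k₁ - 2 ^ (m + 1) - 1) + 2 ^ (m + 1) from by omega,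
                xor_add_pow_left (by omega) c2] at h5
              have hx : (k₁ - 2 ^ (m + 1) - 1) ^^^ (k₂ - 1) =
                  Nval (m + 1) fun t => γ t.castSucc := by omega
              rcases (IH (k₁ - 2 ^ (m + 1)) k₂).mpr
                  ⟨by omega, h2, by omega, by omega, hx⟩ with h | h
              · exact Or.inl (Or.inl ⟨(k₁ - 2 ^ (m + 1), k₂), h, by omega, rfl⟩)
              · exact Or.inr (Or.inr ⟨(k₂, k₁ - 2 ^ (m + 1)), h, rfl, by omega⟩)
            · exfalso
              rw [show k₁ - 1 = (k₁ - 1 - 2 ^ (m + 1)) + 2 ^ (m + 1) from by omega,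
                show k₂ - 1 = (k₂ - 1 - 2 ^ (m + 1)) + 2 ^ (m + 1) from by omega,
                xor_add_pow_both (by omega) (by omega)] at h5
              have := Nat.xor_lt_two_pow (n := m + 1)
                (x := k₁ - 1 - 2 ^ (m + 1)) (y := k₂ - 1 - 2 ^ (m + 1)) (by omega) (by omega)
              omega
        · -- last bit 0
          have hγ' : (fun t : Fin (m + 1) => γ t.castSucc) ≠ fun _ => false := by
            intro hc
            refine hγ (funext fun t => ?_)
            refine Fin.lastCases ?_ (fun i => congrFun hc i) t
            simpa using hlast
          have IH := ih (fun t => γ t.castSucc) hγ'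
          have hN : Nval (m + 2) γ = Nval (m + 1) fun t => γ t.castSucc := by
            rw [hsplit, if_neg hlast]
            simp
          have hF : flipSet (m + 2) γ =
              (flipSet (m + 1) fun t => γ t.castSucc) ∪
                (flipSet (m + 1) fun t => γ t.castSucc).image
                  (fun e => (e.1 + 2 ^ (m + 1), e.2 + 2 ^ (m + 1))) := by
            simp only [flipSet]
            rw [if_neg hbase, if_neg hlast]
          rw [hF, hN]
          simp only [Finset.mem_union, Finset.mem_image, Prod.mk.injEq]
          constructor
          · rintro ((he | ⟨⟨a, b⟩, he, h1, h2⟩) | (he | ⟨⟨a, b⟩, he, h1, h2⟩))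
            · obtain ⟨ha1, hb1, ha2, hb2, hxor⟩ := (IH k₁ k₂).mp (Or.inl he)
              exact ⟨ha1, hb1, by omega, by omega, hxor⟩
            · obtain ⟨ha1, hb1, ha2, hb2, hxor⟩ := (IH a b).mp (Or.inl he)
              refine ⟨by omega, by omega, by omega, by omega, ?_⟩
              rw [show k₁ - 1 = (a - 1) + 2 ^ (m + 1) from by omega,
                show k₂ - 1 = (b - 1) + 2 ^ (m + 1) from by omega,
                xor_add_pow_both (by omega) (by omega), hxor]
            · obtain ⟨ha1, hb1, ha2, hb2, hxor⟩ := (IH k₂ k₁).mp (Or.inl he)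
              exact ⟨hb1, ha1, by omega, by omega, by rw [Nat.xor_comm]; exact hxor⟩
            · obtain ⟨ha1, hb1, ha2, hb2, hxor⟩ := (IH a b).mp (Or.inl he)
              refine ⟨by omega, by omega, by omega, by omega, ?_⟩
              rw [show k₂ - 1 = (a - 1) + 2 ^ (m + 1) from by omega,
                show k₁ - 1 = (b - 1) + 2 ^ (m + 1) from by omega,
                xor_add_pow_both (by omega) (by omega), Nat.xor_comm, hxor]
          · rintro ⟨h1, h2, h3, h4, h5⟩
            rcases Nat.lt_or_ge (k₁ - 1) (2 ^ (m + 1)) with c1 | c1 <;>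
              rcases Nat.lt_or_ge (k₂ - 1) (2 ^ (m + 1)) with c2 | c2
            · rcases (IH k₁ k₂).mpr ⟨h1, h2, by omega, by omega, h5⟩ with h | h
              · exact Or.inl (Or.inl h)
              · exact Or.inr (Or.inl h)
            · exfalso
              rw [show k₂ - 1 = (k₂ - 1 - 2 ^ (m + 1)) + 2 ^ (m + 1) from by omega,
                xor_add_pow_right c1 (by omega)] at h5
              omega
            · exfalso
              rw [show k₁ - 1 = (k₁ - 1 - 2 ^ (m + 1)) + 2 ^ (m + 1) from by omega,
                xor_add_pow_left (by omega) c2] at h5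
              omega
            · rw [show k₁ - 1 = (k₁ - 2 ^ (m + 1) - 1) + 2 ^ (m + 1) from by omega,
                show k₂ - 1 = (k₂ - 2 ^ (m + 1) - 1) + 2 ^ (m + 1) from by omega,
                xor_add_pow_both (by omega) (by omega)] at h5
              rcases (IH (k₁ - 2 ^ (m + 1)) (k₂ - 2 ^ (m + 1))).mpr
                  ⟨by omega, by omega, by omega, by omega, h5⟩ with h | h
              · exact Or.inl (Or.inr ⟨(k₁ - 2 ^ (m + 1), k₂ - 2 ^ (m + 1)), h, by omega, by omega⟩)
              · exact Or.inr (Or.inr ⟨(k₂ - 2 ^ (m + 1), k₁ - 2 ^ (m + 1)), h, by omega, by omega⟩)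

/-- For `m ≥ 1` and nonzero `γ ∈ {0,1}^m`, the set of pairs produced by the
recursive splitting construction coincides (as a set of unordered pairs) with
`{{k₁, k₂} : (k₁−1) XOR (k₂−1) = Σ_t γ[t]·2^{t−1}}` inside `{1, …, 2^m}`; hence every pair
generated by Algorithm 2 is feasible, i.e. satisfies all segmental parity check requirements
encoded by `γ`. -/
theorem flipSet_correct (m : ℕ) (hm : 1 ≤ m) (γ : Fin m → Bool)
    (hγ : γ ≠ fun _ => false) :
    (∀ k₁ k₂ : ℕ, k₁ < k₂ →
      (((k₁, k₂) ∈ flipSet m γ ∨ (k₂, k₁) ∈ flipSet m γ) ↔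
        (1 ≤ k₁ ∧ k₂ ≤ 2 ^ m ∧
          (k₁ - 1) ^^^ (k₂ - 1) = ∑ t : Fin m, (if γ t then 2 ^ (t : ℕ) else 0)))) ∧
    (∀ e ∈ flipSet m γ, FeasiblePair m γ e.1 e.2) := by
  have key := mem_char m γ hγ
  constructor
  · intro k₁ k₂ hlt
    rw [show (∑ t : Fin m, (if γ t then 2 ^ (t : ℕ) else 0)) = Nval m γ from rfl, key k₁ k₂]
    constructor
    · rintro ⟨a, b, c, d, e⟩
      exact ⟨a, d, e⟩
    · rintro ⟨a, d, e⟩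
      exact ⟨a, by omega, by omega, d, e⟩
  · rintro ⟨k₁, k₂⟩ he
    obtain ⟨h1, h2, -, -, hx⟩ := (key k₁ k₂).mp (Or.inl he)
    intro t
    have hbit := congrArg (fun x => x.testBit (t : ℕ)) hx
    simp only [Nat.testBit_xor] at hbit
    rw [Nval_testBit m γ (t : ℕ) t.isLt] at hbit
    simp only [Fin.eta] at hbit
    simp only [InSeg, Nat.add_sub_cancel]
    rcases hb1 : (k₁ - 1).testBit (t : ℕ) <;> rcases hb2 : (k₂ - 1).testBit (t : ℕ) <;>
      simp_all [Xor']
end
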